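/- The tree degree sequences D = F = (5,2,2,2,2,2,1,1,1,1,1) on 11 vertices have edge-disjoint tree realizations, but they do not have edge-disjoint realizations in which both trees are caterpillars. -/

import Mathlib

open SimpleGraph

/-- `G` realizes the degree sequence `d`: vertex `v` has degree `d v`. -/
def realizes {n : ℕ} (G : SimpleGraph (Fin n)) (d : Fin n → ℕ) : Prop :=
  ∀ v, {u | G.Adj v u}.ncard = d v

/-- A tree degree sequence: positive entries summing to `2n - 2`. -/
def isTreeSeq {n : ℕ} (d : Fin n → ℕ) : Prop :=
  (∀ i, 1 ≤ d i) ∧ (∑ i, d i) = 2 * n - 2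

/-- A caterpillar: a tree whose non-leaf vertices span a path. -/
def isCaterpillar {n : ℕ} (T : SimpleGraph (Fin n)) : Prop :=
  T.IsTree ∧ ∃ p : List (Fin n), p.Nodup ∧ p.Chain' T.Adj ∧
    ∀ v, (1 < {u | T.Adj v u}.ncard ↔ v ∈ p)

/-! ### Certificates for connectivity and acyclicity -/

section rank
variable {V : Type*} {G : SimpleGraph V}

lemma connected_of_rank [Nonempty V] (f : V → ℕ) (r : V)
    (h : ∀ v, v ≠ r → ∃ u, G.Adj v u ∧ f u < f v) : G.Connected := by
  have key : ∀ n v, f v < n → G.Reachable v r := by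
    intro n
    induction n with
    | zero => intro v hv; omega
    | succ n ih =>
      intro v hv
      by_cases hvr : v = r
      · subst hvr; exact Reachable.refl v
      · obtain ⟨u, ha, hlt⟩ := h v hvr
        exact ha.reachable.trans (ih u (by omega))
  have reach : ∀ v, G.Reachable v r := fun v => key (f v + 1) v (Nat.lt_succ_self _)
  exact ⟨fun u v => (reach u).trans (reach v).symm⟩

lemma acyclic_of_rank [DecidableEq V] (f : V → ℕ)
    (hne : ∀ u v, G.Adj u v → f u ≠ f v)
    (huniq : ∀ u v w, G.Adj u v → G.Adj u w → f v < f u → f w < f u → v = w) :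
    G.IsAcyclic := by
  intro v c hc
  obtain ⟨u, hu_mem, hmax⟩ := Finset.exists_max_image c.support.toFinset f
    ⟨v, List.mem_toFinset.mpr c.start_mem_support⟩
  have hu : u ∈ c.support := List.mem_toFinset.mp hu_mem
  set c' := c.rotate u hu with hc'def
  have hc' : c'.IsCycle := hc.rotate hu
  have hmemc : ∀ z, z ∈ c'.support → z ∈ c.support := by
    intro z hz
    rw [c'.support_eq_cons] at hz
    rcases List.mem_cons.mp hz with rfl | hz
    · exact hu
    · exact List.mem_of_mem_tail (((Walk.support_rotate c u hu).mem_iff).mp hz)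
  obtain ⟨x, hax, qx, hqx⟩ := Walk.not_nil_iff.mp hc'.not_nil
  have hrevnn : ¬ c'.reverse.Nil := by
    rw [Walk.not_nil_iff_lt_length, Walk.length_reverse]
    have := hc'.three_le_length; omega
  obtain ⟨y, hay, qy, hqy⟩ := Walk.not_nil_iff.mp hrevnn
  have hExy : c'.edges = s(u, x) :: qx.edges := by rw [hqx]; rfl
  have hEyrev : c'.edges.reverse = s(u, y) :: qy.edges := by
    rw [← Walk.edges_reverse, hqy]; rfl
  have hxy : x ≠ y := by
    intro hxyeq
    subst hxyeq
    have hnd : c'.edges.Nodup := hc'.isCircuit.isTrail.edges_nodup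
    have hlen : 3 ≤ c'.edges.length := by
      rw [Walk.length_edges]; exact hc'.three_le_length
    have hqnn : qx.edges ≠ [] := by
      intro h
      rw [hExy, h] at hlen; simp at hlen
    have hlast : c'.edges.getLast? = some s(u, x) := by
      rw [← List.head?_reverse, hEyrev]; rfl
    rw [hExy, List.getLast?_eq_getLast_of_ne_nil (List.cons_ne_nil _ _),
      List.getLast_cons hqnn] at hlast
    have : s(u, x) ∈ qx.edges := by
      have hm := List.getLast_mem hqnn
      rwa [Option.some_inj.mp hlast] at hm
    rw [hExy] at hnd
    exact (List.nodup_cons.mp hnd).1 this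
  have hxmem : x ∈ c.support := by
    apply hmemc
    rw [hqx]
    exact List.mem_of_mem_tail (by simp [Walk.support_cons, qx.start_mem_support])
  have hymem : y ∈ c.support := by
    apply hmemc
    have : y ∈ c'.reverse.support := by
      rw [hqy]
      exact List.mem_of_mem_tail (by simp [Walk.support_cons, qy.start_mem_support])
    rwa [Walk.support_reverse, List.mem_reverse] at this
  have hxlt : f x < f u :=
    lt_of_le_of_ne (hmax x (List.mem_toFinset.mpr hxmem)) fun h => hne u x hax h.symm
  have hylt : f y < f u :=
    lt_of_le_of_ne (hmax y (List.mem_toFinset.mpr hymem)) fun h => hne u y hay h.symm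
  exact hxy (huniq u x y hax hay hxlt hylt)

end rank

/-! ### Paths inside trees -/

section chains
variable {V : Type*} {G : SimpleGraph V}

lemma exists_walk_of_chain :
    ∀ (l : List V) (a b : V), List.Chain' G.Adj (a :: (l ++ [b])) →
      ∃ w : G.Walk a b, w.support = a :: (l ++ [b])
  | [], a, b, h => by
    have hab : G.Adj a b := (List.isChain_cons_cons.mp h).1
    exact ⟨Walk.cons hab Walk.nil, by simp⟩
  | c :: l, a, b, h => by
    have h' := List.isChain_cons_cons.mp (show List.IsChain G.Adj (a :: c :: (l ++ [b])) from h)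
    obtain ⟨w', hw'⟩ := exists_walk_of_chain l c b h'.2
    exact ⟨Walk.cons h'.1 w', by simp [hw']⟩

lemma split_eq {a : V} : ∀ (l₁ s : List V) {l₂ r : List V},
    l₁ ++ a :: l₂ = s ++ a :: r → a ∉ l₁ → a ∉ s → l₁ = s ∧ l₂ = r
  | [], [], _, _, h, _, _ => by simpa using h
  | [], x :: s, _, _, h, h1, h2 => by
    simp only [List.nil_append, List.cons_append, List.cons.injEq] at h
    exact absurd (h.1 ▸ List.mem_cons_self (a := x) (l := s)) h2
  | x :: l₁, [], _, _, h, h1, h2 => by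
    simp only [List.cons_append, List.nil_append, List.cons.injEq] at h
    exact absurd (h.1 ▸ List.mem_cons_self (a := x) (l := l₁)) h1
  | x :: l₁, y :: s, l₂, r, h, h1, h2 => by
    simp only [List.cons_append, List.cons.injEq] at h
    obtain ⟨rfl, h⟩ := h
    obtain ⟨h3, h4⟩ := split_eq l₁ s h (fun hm => h1 (List.mem_cons_of_mem _ hm))
      (fun hm => h2 (List.mem_cons_of_mem _ hm))
    exact ⟨by rw [h3], h4⟩

lemma consecutive_of_adj (hT : G.IsTree) {p : List V} (hnd : p.Nodup)
    (hch : p.Chain' G.Adj) {a b : V} (hadj : G.Adj a b) (ha : a ∈ p) (hb : b ∈ p) :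
    [a, b] <:+: p ∨ [b, a] <:+: p := by
  classical
  obtain ⟨l₁, l₂, rfl⟩ := List.append_of_mem ha
  have hedge : (Walk.cons hadj (Walk.nil : G.Walk b b)).IsPath := by
    rw [Walk.isPath_def]; simp [hadj.ne]
  rcases List.mem_append.mp hb with hb1 | hb2
  · obtain ⟨m₁, m₂, rfl⟩ := List.append_of_mem hb1
    have hinf : (b :: (m₂ ++ [a])) <:+: (m₁ ++ b :: m₂) ++ a :: l₂ :=
      ⟨m₁, l₂, by simp⟩
    obtain ⟨w, hw⟩ := exists_walk_of_chain m₂ b a (hch.infix hinf)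
    have hwp : w.IsPath := by
      rw [Walk.isPath_def, hw]
      exact hinf.sublist.nodup hnd
    have hedge' : (Walk.cons hadj.symm (Walk.nil : G.Walk a a)).IsPath := by
      rw [Walk.isPath_def]; simp [hadj.ne']
    have := (hT.existsUnique_path b a).unique hwp hedge'
    have hsupp : b :: (m₂ ++ [a]) = [b, a] := by rw [← hw, this]; simp
    have hm : m₂ = [] := by
      have := congrArg List.length hsupp; simp at this; simpa using this
    subst hm
    exact Or.inr ⟨m₁, l₂, by simpa using hinf.2.choose_spec⟩
  · rcases List.mem_cons.mp hb2 with rfl | hb3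
    · exact absurd rfl hadj.ne
    · obtain ⟨m₁, m₂, rfl⟩ := List.append_of_mem hb3
      have hinf : (a :: (m₁ ++ [b])) <:+: l₁ ++ a :: (m₁ ++ b :: m₂) :=
        ⟨l₁, m₂, by simp⟩
      obtain ⟨w, hw⟩ := exists_walk_of_chain m₁ a b (hch.infix hinf)
      have hwp : w.IsPath := by
        rw [Walk.isPath_def, hw]
        exact hinf.sublist.nodup hnd
      have := (hT.existsUnique_path a b).unique hwp hedge
      have hsupp : a :: (m₁ ++ [b]) = [a, b] := by rw [← hw, this]; simp
      have hm : m₁ = [] := by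
        have := congrArg List.length hsupp; simp at this; simpa using this
      subst hm
      exact Or.inl ⟨l₁, m₂, by simpa using hinf.2.choose_spec⟩

lemma nbrs_in_path_le (hT : G.IsTree) {p : List V} (hnd : p.Nodup)
    (hch : p.Chain' G.Adj) {a : V} (ha : a ∈ p) :
    {u | G.Adj a u ∧ u ∈ p}.ncard ≤ 2 := by
  classical
  obtain ⟨l₁, l₂, rfl⟩ := List.append_of_mem ha
  have hndsplit := List.nodup_append'.mp hnd
  have ha1 : a ∉ l₁ := fun h => hndsplit.2.2 h (List.mem_cons_self (a := a) (l := l₂))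
  have hsub : {u | G.Adj a u ∧ u ∈ l₁ ++ a :: l₂} ⊆
      {l₁.getLast?.getD a, l₂.head?.getD a} := by
    rintro u ⟨hadj, hu⟩
    rcases consecutive_of_adj hT hnd hch hadj (by simp) hu with hinf | hinf
    · obtain ⟨s, t, hst⟩ := hinf
      have hst' : s ++ a :: (u :: t) = l₁ ++ a :: l₂ := by simpa using hst
      have hans : a ∉ s := by
        intro hmem
        have hnd' : (s ++ a :: (u :: t)).Nodup := hst' ▸ hnd
        exact (List.nodup_append'.mp hnd').2.2 hmem List.mem_cons_self
      obtain ⟨hs, ht⟩ := split_eq s l₁ hst' hans ha1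
      right
      rw [← ht]
      rfl
    · obtain ⟨s, t, hst⟩ := hinf
      have hst' : (s ++ [u]) ++ a :: t = l₁ ++ a :: l₂ := by
        simpa [List.append_assoc] using hst
      have hans : a ∉ s ++ [u] := by
        intro hmem
        have hnd' : ((s ++ [u]) ++ a :: t).Nodup := hst' ▸ hnd
        exact (List.nodup_append'.mp hnd').2.2 hmem List.mem_cons_self
      obtain ⟨hs, ht⟩ := split_eq (s ++ [u]) l₁ hst' hans ha1
      left
      rw [← hs, List.getLast?_concat]
      rfl
  calc {u | G.Adj a u ∧ u ∈ l₁ ++ a :: l₂}.ncard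
      ≤ ({l₁.getLast?.getD a, l₂.head?.getD a} : Set V).ncard :=
        Set.ncard_le_ncard hsub ((Set.finite_singleton _).insert _)
    _ ≤ 2 := by
        refine (Set.ncard_insert_le _ _).trans ?_
        simp [Set.ncard_singleton]

end chains

/-! ### The explicit edge-disjoint tree realizations -/

def adjP (l : List (ℕ × ℕ)) (u v : Fin 11) : Bool :=
  l.any fun q => (q.1 == u.val && q.2 == v.val) || (q.1 == v.val && q.2 == u.val)

def E1 : List (ℕ × ℕ) := [(0,1),(0,2),(0,6),(0,7),(0,8),(1,3),(3,4),(4,5),(5,9),(2,10)]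
def E2 : List (ℕ × ℕ) := [(0,3),(0,4),(0,5),(0,9),(0,10),(2,3),(2,6),(1,4),(1,7),(5,8)]

def G1 : SimpleGraph (Fin 11) where
  Adj u v := adjP E1 u v = true
  symm := ⟨fun u v h =>
    (by decide : ∀ u v : Fin 11, adjP E1 u v = true → adjP E1 v u = true) u v h⟩
  loopless := ⟨fun v h =>
    (by decide : ∀ v : Fin 11, ¬ adjP E1 v v = true) v h⟩

def G2 : SimpleGraph (Fin 11) where
  Adj u v := adjP E2 u v = true
  symm := ⟨fun u v h =>
    (by decide : ∀ u v : Fin 11, adjP E2 u v = true → adjP E2 v u = true) u v h⟩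
  loopless := ⟨fun v h =>
    (by decide : ∀ v : Fin 11, ¬ adjP E2 v v = true) v h⟩

instance : DecidableRel G1.Adj := fun u v => inferInstanceAs (Decidable (adjP E1 u v = true))
instance : DecidableRel G2.Adj := fun u v => inferInstanceAs (Decidable (adjP E2 u v = true))

lemma ncard_eq_filter {n : ℕ} (G : SimpleGraph (Fin n)) [DecidableRel G.Adj] (v : Fin n) :
    {u | G.Adj v u}.ncard = (Finset.univ.filter (fun u => G.Adj v u)).card := by
  rw [← Set.ncard_coe_finset]
  congr 1
  ext u
  simp

def f1 : Fin 11 → ℕ := ![0,1,1,2,3,4,1,1,1,5,2]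
def f2 : Fin 11 → ℕ := ![0,2,2,1,1,1,3,3,2,1,1]

lemma G1_tree : G1.IsTree := by
  constructor
  · exact connected_of_rank f1 0 (by decide)
  · exact acyclic_of_rank f1 (by decide) (by decide)

lemma G2_tree : G2.IsTree := by
  constructor
  · exact connected_of_rank f2 0 (by decide)
  · exact acyclic_of_rank f2 (by decide) (by decide)

lemma G1_realizes : realizes G1 ![5,2,2,2,2,2,1,1,1,1,1] := by
  have h : ∀ v : Fin 11, (Finset.univ.filter (fun u => G1.Adj v u)).card =
      (![5,2,2,2,2,2,1,1,1,1,1] : Fin 11 → ℕ) v := by decide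
  intro v
  rw [ncard_eq_filter]
  exact h v

lemma G2_realizes : realizes G2 ![5,2,2,2,2,2,1,1,1,1,1] := by
  have h : ∀ v : Fin 11, (Finset.univ.filter (fun u => G2.Adj v u)).card =
      (![5,2,2,2,2,2,1,1,1,1,1] : Fin 11 → ℕ) v := by decide
  intro v
  rw [ncard_eq_filter]
  exact h v

lemma G_disjoint : Disjoint G1.edgeSet G2.edgeSet := by
  have h : ∀ a b : Fin 11, G1.Adj a b → G2.Adj a b → False := by decide
  rw [Set.disjoint_left]
  intro e he1 he2
  induction e using Sym2.ind with
  | _ a b => exact h a b ((G1.mem_edgeSet).mp he1) ((G2.mem_edgeSet).mp he2)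

/-! ### No caterpillar realizations -/

lemma caterpillar_three {T : SimpleGraph (Fin 11)}
    (hcat : isCaterpillar T) (hr : realizes T ![5,2,2,2,2,2,1,1,1,1,1]) :
    3 ≤ {u : Fin 11 | T.Adj 0 u ∧ u ∈ ({6,7,8,9,10} : Finset (Fin 11))}.ncard := by
  classical
  obtain ⟨hT, p, hnd, hch, hm⟩ := hcat
  have hdeg0 : {u | T.Adj 0 u}.ncard = 5 := by
    have := hr 0; simpa using this
  have h0p : (0 : Fin 11) ∈ p := (hm 0).mp (by rw [hdeg0]; norm_num)
  have hA : {u : Fin 11 | T.Adj 0 u ∧ u ∈ p}.ncard ≤ 2 := nbrs_in_path_le hT hnd hch h0p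
  have hunion : {u : Fin 11 | T.Adj 0 u ∧ u ∈ p} ∪ {u : Fin 11 | T.Adj 0 u ∧ u ∉ p} =
      {u | T.Adj 0 u} := by
    ext u
    by_cases h : u ∈ p <;> simp [h]
  have hdisjAB : Disjoint {u : Fin 11 | T.Adj 0 u ∧ u ∈ p}
      {u : Fin 11 | T.Adj 0 u ∧ u ∉ p} :=
    Set.disjoint_left.mpr (fun u hu hu' => hu'.2 hu.2)
  have hcardU : {u : Fin 11 | T.Adj 0 u ∧ u ∈ p}.ncard +
      {u : Fin 11 | T.Adj 0 u ∧ u ∉ p}.ncard = 5 := by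
    rw [← Set.ncard_union_eq hdisjAB (Set.toFinite _) (Set.toFinite _), hunion, hdeg0]
  have hB3 : 3 ≤ {u : Fin 11 | T.Adj 0 u ∧ u ∉ p}.ncard := by omega
  have hBsub : {u : Fin 11 | T.Adj 0 u ∧ u ∉ p} ⊆
      {u : Fin 11 | T.Adj 0 u ∧ u ∈ ({6,7,8,9,10} : Finset (Fin 11))} := by
    rintro u ⟨hadj, hup⟩
    refine ⟨hadj, ?_⟩
    have hnot : ¬ 1 < {w | T.Adj u w}.ncard := fun h => hup ((hm u).mp h)
    rw [hr u] at hnot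
    exact (by decide : ∀ x : Fin 11, ¬ 1 < (![5,2,2,2,2,2,1,1,1,1,1] : Fin 11 → ℕ) x →
      x ∈ ({6,7,8,9,10} : Finset (Fin 11))) u hnot
  exact le_trans hB3 (Set.ncard_le_ncard hBsub (Set.toFinite _))

theorem trees_but_no_caterpillars :
    (∃ T₁ T₂ : SimpleGraph (Fin 11),
        T₁.IsTree ∧ T₂.IsTree ∧
        realizes T₁ ![5,2,2,2,2,2,1,1,1,1,1] ∧ realizes T₂ ![5,2,2,2,2,2,1,1,1,1,1] ∧
        Disjoint T₁.edgeSet T₂.edgeSet) ∧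
    ¬ (∃ T₁ T₂ : SimpleGraph (Fin 11),
        isCaterpillar T₁ ∧ isCaterpillar T₂ ∧
        realizes T₁ ![5,2,2,2,2,2,1,1,1,1,1] ∧ realizes T₂ ![5,2,2,2,2,2,1,1,1,1,1] ∧
        Disjoint T₁.edgeSet T₂.edgeSet) := by
  constructor
  · exact ⟨G1, G2, G1_tree, G2_tree, G1_realizes, G2_realizes, G_disjoint⟩
  · rintro ⟨T₁, T₂, hc₁, hc₂, hr₁, hr₂, hdisj⟩
    have h3₁ := caterpillar_three hc₁ hr₁
    have h3₂ := caterpillar_three hc₂ hr₂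
    set S₁ := {u : Fin 11 | T₁.Adj 0 u ∧ u ∈ ({6,7,8,9,10} : Finset (Fin 11))} with hS₁
    set S₂ := {u : Fin 11 | T₂.Adj 0 u ∧ u ∈ ({6,7,8,9,10} : Finset (Fin 11))} with hS₂
    have hsub₁ : S₁ ⊆ (↑({6,7,8,9,10} : Finset (Fin 11)) : Set (Fin 11)) := fun u hu => hu.2
    have hsub₂ : S₂ ⊆ (↑({6,7,8,9,10} : Finset (Fin 11)) : Set (Fin 11)) := fun u hu => hu.2
    have hne : (S₁ ∩ S₂).Nonempty := by
      by_contra h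
      rw [Set.not_nonempty_iff_eq_empty] at h
      have hd : Disjoint S₁ S₂ := Set.disjoint_iff_inter_eq_empty.mpr h
      have hcard := Set.ncard_union_eq hd (Set.toFinite _) (Set.toFinite _)
      have hle : (S₁ ∪ S₂).ncard ≤ 5 := by
        calc (S₁ ∪ S₂).ncard
            ≤ (↑({6,7,8,9,10} : Finset (Fin 11)) : Set (Fin 11)).ncard :=
              Set.ncard_le_ncard (Set.union_subset hsub₁ hsub₂) (Set.toFinite _)
          _ = 5 := by rw [Set.ncard_coe_finset]; decide
      omega
    obtain ⟨x, hx₁, hx₂⟩ := hne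
    exact Set.disjoint_left.mp hdisj ((T₁.mem_edgeSet).mpr hx₁.1)
      ((T₂.mem_edgeSet).mpr hx₂.1)
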